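/- Suppose v has no zero row and no zero column. If (p*, x*) is a competitive equilibrium of the Fisher market with quasi-linear utilities u_i(x) = Σ_{j=1}^m (v_{ij} − p*_j)x_j, then for every good j one has min_{j'∈[m]} max_{i∈[n]} ( v_{ij'}·B_i / (Σ_{j''=1}^m v_{ij''} + B_i) ) ≤ p*_j ≤ max_{i∈[n], j'∈[m]} v_{ij'}. -/
import Mathlib


open scoped Classical

noncomputable section

/-- Extended valuation vector of buyer `i`: index `0` gets value `1` (the convention
`v_{i0} = 1`), index `j+1` gets `v i j`. -/
def extV {n m : ℕ} (v : Fin n → Fin m → ℝ) (i : Fin n) : Fin (m + 1) → ℝ :=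
  Fin.cons 1 (v i)

/-- Extended log-price vector: index `0` gets `0` (the convention `μ₀ = 0`),
index `j+1` gets `μ j`. -/
def extMu {m : ℕ} (μ : Fin m → ℝ) : Fin (m + 1) → ℝ :=
  Fin.cons 0 μ

/-- The smoothed weight `exp((log v_{ij} − μ_j)/δ) = v_{ij}^{1/δ} · exp(−μ_j/δ)`,
with the conventions `log 0 = −∞`, `exp (−∞) = 0` (via `0 ^ (1/δ) = 0` for `δ > 0`). -/
def wt {n m : ℕ} (v : Fin n → Fin m → ℝ) (δ : ℝ) (μ : Fin m → ℝ) (i : Fin n)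
    (j : Fin (m + 1)) : ℝ :=
  extV v i j ^ (1 / δ) * Real.exp (-extMu μ j / δ)

/-- The smoothed objective `F_δ`. -/
def Fd {n m : ℕ} (B : Fin n → ℝ) (v : Fin n → Fin m → ℝ) (δ : ℝ) (μ : Fin m → ℝ) : ℝ :=
  (∑ j, Real.exp (μ j)) + δ * ∑ i, B i * Real.log (∑ j, wt v δ μ i j)

/-- The gradient of the smoothed objective `F_δ`. -/
def gradFd {n m : ℕ} (B : Fin n → ℝ) (v : Fin n → Fin m → ℝ) (δ : ℝ) (μ : Fin m → ℝ)
    (j : Fin m) : ℝ :=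
  Real.exp (μ j) - ∑ i, B i * (wt v δ μ i j.succ / ∑ j', wt v δ μ i j')

/-- The value `v_{ij} · exp(−μ_j)` (over extended indices), whose logarithm is
`log v_{ij} − μ_j` with the convention `log 0 = −∞`. -/
def valF {n m : ℕ} (v : Fin n → Fin m → ℝ) (μ : Fin m → ℝ) (i : Fin n) (j : Fin (m + 1)) : ℝ :=
  extV v i j * Real.exp (-extMu μ j)

/-- `h_i(μ) = max_{j ∈ {0,…,m}} (log v_{ij} − μ_j)`, realized as the logarithm of the
(positive) maximum of the values `v_{ij} e^{−μ_j}`. -/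
def hMax {n m : ℕ} (v : Fin n → Fin m → ℝ) (μ : Fin m → ℝ) (i : Fin n) : ℝ :=
  Real.log (Finset.univ.sup' Finset.univ_nonempty (valF v μ i))

/-- The nonsmooth objective `F`. -/
def Fobj {n m : ℕ} (B : Fin n → ℝ) (v : Fin n → Fin m → ℝ) (μ : Fin m → ℝ) : ℝ :=
  (∑ j, Real.exp (μ j)) + ∑ i, B i * hMax v μ i

/-- The active index set `𝒥_i(μ) = {j ∈ {0,…,m} : log v_{ij} − μ_j = h_i(μ)}`. -/
def activeSet {n m : ℕ} (v : Fin n → Fin m → ℝ) (μ : Fin m → ℝ) (i : Fin n) :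
    Finset (Fin (m + 1)) :=
  Finset.univ.filter fun j =>
    valF v μ i j = Finset.univ.sup' Finset.univ_nonempty (valF v μ i)

/-- The Euclidean norm on `ℝ^m`. -/
def enorm2 {m : ℕ} (x : Fin m → ℝ) : ℝ :=
  Real.sqrt (∑ j, x j ^ 2)

end

/-- bounds on competitive equilibrium prices for quasi-linear utilities. -/
theorem ce_price_bounds_quasilinear
    (n m : ℕ) (hn : 1 ≤ n) (hm : 1 ≤ m)
    (B : Fin n → ℝ) (hB : ∀ i, 0 < B i)
    (v : Fin n → Fin m → ℝ) (hv : ∀ i j, 0 ≤ v i j)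
    (hrow : ∀ i, ∃ j, v i j ≠ 0) (hcol : ∀ j, ∃ i, v i j ≠ 0)
    (p : Fin m → ℝ) (x : Fin n → Fin m → ℝ)
    (hp : ∀ j, 0 ≤ p j) (hx : ∀ i j, 0 ≤ x i j)
    (hE1 : ∀ i, ∑ j, p j * x i j ≤ B i)
    (hE2 : ∀ i, ∀ y : Fin m → ℝ, (∀ j, 0 ≤ y j) → (∑ j, p j * y j) ≤ B i →
      ∑ j, (v i j - p j) * y j ≤ ∑ j, (v i j - p j) * x i j)
    (hE3 : ∀ j, ∑ i, x i j ≤ 1) (hE3' : ∀ j, 0 < p j → ∑ i, x i j = 1) :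
    ∀ j, Finset.univ.inf' ⟨⟨0, hm⟩, Finset.mem_univ _⟩
        (fun j' => Finset.univ.sup' ⟨⟨0, hn⟩, Finset.mem_univ _⟩
          (fun i => v i j' * B i / ((∑ j'', v i j'') + B i))) ≤ p j ∧
      p j ≤ Finset.univ.sup' ⟨⟨0, hn⟩, Finset.mem_univ _⟩
        (fun i => Finset.univ.sup' ⟨⟨0, hm⟩, Finset.mem_univ _⟩ (fun j' => v i j')) := by

  -- Per-buyer bound on utility at equilibrium.
  have hxle1 : ∀ i k, x i k ≤ 1 := by
    intro i k
    calc x i k ≤ ∑ i', x i' k :=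
          Finset.single_le_sum (fun i' _ => hx i' k) (Finset.mem_univ i)
      _ ≤ 1 := hE3 k
  have hUub : ∀ i, ∑ k, (v i k - p k) * x i k ≤ ∑ k, v i k := by
    intro i
    apply Finset.sum_le_sum
    intro k _
    calc (v i k - p k) * x i k ≤ v i k * x i k := by
          apply mul_le_mul_of_nonneg_right _ (hx i k)
          linarith [hp k]
      _ ≤ v i k * 1 := mul_le_mul_of_nonneg_left (hxle1 i k) (hv i k)
      _ = v i k := mul_one _
  -- key lemma : for every buyer i and good j',  v i j' * B i ≤ p j' * ((∑ v i) + B i)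
  have key : ∀ i j', v i j' * B i ≤ p j' * ((∑ j'', v i j'') + B i) := by
    intro i j'
    rcases (hp j').lt_or_eq with hpos | hzero
    · -- p j' > 0 : buy B i / p j' units of good j'
      set y : Fin m → ℝ := fun k => if k = j' then B i / p j' else 0 with hy
      have hynn : ∀ k, 0 ≤ y k := by
        intro k; simp only [hy]
        split
        · exact div_nonneg (hB i).le hpos.le
        · exact le_refl 0
      have hbudget : ∑ k, p k * y k ≤ B i := by
        have : ∑ k, p k * y k = p j' * (B i / p j') := by
          simp only [hy, mul_ite, mul_zero]
          rw [Finset.sum_ite_eq' Finset.univ j']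
          simp
        rw [this, mul_div_cancel₀ _ (ne_of_gt hpos)]
      have h2 := hE2 i y hynn hbudget
      have hyval : ∑ k, (v i k - p k) * y k = (v i j' - p j') * (B i / p j') := by
        simp only [hy, mul_ite, mul_zero]
        rw [Finset.sum_ite_eq' Finset.univ j']
        simp
      have h3 : (v i j' - p j') * (B i / p j') ≤ ∑ k, v i k := by
        rw [← hyval]; exact h2.trans (hUub i)
      have h4 : (v i j' - p j') * B i ≤ p j' * ∑ k, v i k := by
        have := mul_le_mul_of_nonneg_left h3 hpos.le
        calc (v i j' - p j') * B i = p j' * ((v i j' - p j') * (B i / p j')) := by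
              field_simp
          _ ≤ p j' * ∑ k, v i k := this
      nlinarith [hB i]
    · -- p j' = 0 : then v i j' must be 0
      have hv0 : v i j' = 0 := by
        by_contra hne
        have hvpos : 0 < v i j' := lt_of_le_of_ne (hv i j') (Ne.symm hne)
        set y : Fin m → ℝ := fun k => x i k + if k = j' then 1 else 0 with hy
        have hynn : ∀ k, 0 ≤ y k := by
          intro k; simp only [hy]
          have := hx i k
          split <;> linarith
        have hbudget : ∑ k, p k * y k ≤ B i := by
          have : ∑ k, p k * y k = (∑ k, p k * x i k) + p j' := by
            simp only [hy, mul_add, mul_ite, mul_one, mul_zero]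
            rw [Finset.sum_add_distrib, Finset.sum_ite_eq' Finset.univ j']
            simp
          rw [this, ← hzero, add_zero]
          exact hE1 i
        have h2 := hE2 i y hynn hbudget
        have hyval : ∑ k, (v i k - p k) * y k
            = (∑ k, (v i k - p k) * x i k) + (v i j' - p j') := by
          simp only [hy, mul_add, mul_ite, mul_one, mul_zero]
          rw [Finset.sum_add_distrib, Finset.sum_ite_eq' Finset.univ j']
          simp
        rw [hyval] at h2
        rw [← hzero] at h2
        linarith
      rw [hv0, ← hzero]
      simp
  intro j
  constructor
  · -- lower bound
    obtain ⟨j', _, hj'⟩ := Finset.exists_min_image Finset.univ p ⟨j, Finset.mem_univ j⟩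
    have hj'le : p j' ≤ p j := hj' j (Finset.mem_univ j)
    refine le_trans (Finset.inf'_le _ (Finset.mem_univ j')) ?_
    refine le_trans (Finset.sup'_le _ _ ?_) hj'le
    intro i _
    have hden : 0 < (∑ j'', v i j'') + B i := by
      have : 0 ≤ ∑ j'', v i j'' := Finset.sum_nonneg fun k _ => hv i k
      linarith [hB i]
    rw [div_le_iff₀ hden]
    have := key i j'
    linarith
  · -- upper bound
    by_contra hcon
    push_neg at hcon
    set M := Finset.univ.sup' ⟨⟨0, hn⟩, Finset.mem_univ _⟩
        (fun i => Finset.univ.sup' ⟨⟨0, hm⟩, Finset.mem_univ _⟩ (fun j' => v i j')) with hM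
    have hvleM : ∀ i k, v i k ≤ M := by
      intro i k
      have h1 := Finset.le_sup' (fun i => Finset.univ.sup'
        (⟨⟨0, hm⟩, Finset.mem_univ _⟩ : Finset.univ.Nonempty) (fun j' => v i j'))
        (Finset.mem_univ i)
      exact le_trans (Finset.le_sup' (v i) (Finset.mem_univ k)) h1
    have hpj : 0 < p j := lt_of_le_of_lt (le_trans (hv ⟨0, hn⟩ j) (hvleM ⟨0, hn⟩ j)) hcon
    have hsum1 := hE3' j hpj
    have hexi : ∃ i, 0 < x i j := by
      by_contra hno
      push_neg at hno
      have : ∀ i ∈ Finset.univ, x i j = 0 := fun i _ => le_antisymm (hno i) (hx i j)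
      rw [Finset.sum_eq_zero this] at hsum1
      norm_num at hsum1
    obtain ⟨i, hxi⟩ := hexi
    set y : Fin m → ℝ := fun k => if k = j then 0 else x i k with hy
    have hynn : ∀ k, 0 ≤ y k := by
      intro k; simp only [hy]; split
      · exact le_refl 0
      · exact hx i k
    have hbudget : ∑ k, p k * y k ≤ B i := by
      refine le_trans (Finset.sum_le_sum ?_) (hE1 i)
      intro k _
      simp only [hy]
      split
      · simp [mul_nonneg (hp k) (hx i k)]
      · exact le_refl _
    have h2 := hE2 i y hynn hbudget
    have hyval : ∑ k, (v i k - p k) * y k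
        = (∑ k, (v i k - p k) * x i k) - (v i j - p j) * x i j := by
      have hterm : ∀ k, (v i k - p k) * y k
          = (v i k - p k) * x i k - (if k = j then (v i j - p j) * x i j else 0) := by
        intro k
        simp only [hy]
        split
        · next h => subst h; ring
        · ring
      simp only [hterm]
      rw [Finset.sum_sub_distrib, Finset.sum_ite_eq' Finset.univ j]
      simp
    rw [hyval] at h2
    have hneg : (v i j - p j) * x i j < 0 :=
      mul_neg_of_neg_of_pos (by linarith [hvleM i j]) hxi
    linarith
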